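/- The Voronoi cell of the lattice D̄_d★ = (2ℤ^d) ∪ (𝟏 + 2ℤ^d) satisfies VC(D̄_d★) = [−1,1]^d ∩ (d/2)·conv{±e_1,…,±e_d}, i.e., it is the intersection of a cube and a dilated crosspolytope. Consequently xc(VC(D_d★)) = O(d). -/

import Mathlib

open scoped RealInnerProductSpace

/-- A polytope: the convex hull of finitely many points. -/
def IsPolytope {E : Type*} [AddCommGroup E] [Module ℝ E] (P : Set E) : Prop :=
  ∃ s : Finset E, P = convexHull ℝ (s : Set E)

/-- The extension complexity of `P`: the minimal number of (facet-defining)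
inequalities of a polytope (a bounded polyhedron, in any dimension) that linearly
projects onto `P`. -/
noncomputable def xc {E : Type*} [AddCommGroup E] [Module ℝ E] (P : Set E) : ℕ :=
  sInf {m | ∃ (n : ℕ) (A : Fin m → Fin n → ℝ) (b : Fin m → ℝ)
      (π : (Fin n → ℝ) →ₗ[ℝ] E),
      Bornology.IsBounded {x : Fin n → ℝ | ∀ i, ∑ j, A i j * x j ≤ b i} ∧
      π '' {x : Fin n → ℝ | ∀ i, ∑ j, A i j * x j ≤ b i} = P}

open scoped Pointwise

/-- The (rescaled) dual `D̄_d★ = (2ℤ^d) ∪ (𝟏 + 2ℤ^d)` of the checkerboard lattice. -/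
def dualD (d : ℕ) : Set (EuclideanSpace ℝ (Fin d)) :=
  {x | (∀ i, ∃ z : ℤ, x i = 2 * (z : ℝ)) ∨ (∀ i, ∃ z : ℤ, x i = 2 * (z : ℝ) + 1)}

/-- The Voronoi cell of the (full-dimensional) lattice `D̄_d★`. -/
def vorCellDualD (d : ℕ) : Set (EuclideanSpace ℝ (Fin d)) :=
  {x | ∀ z ∈ dualD d, ‖x‖ ≤ ‖x - z‖}

/-- The standard crosspolytope `conv{±e_1, …, ±e_d}`. -/
def crossPolytope (d : ℕ) : Set (EuclideanSpace ℝ (Fin d)) :=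
  convexHull ℝ {x | ∃ i, x = EuclideanSpace.single i (1 : ℝ) ∨
    x = -EuclideanSpace.single i (1 : ℝ)}

section Vor
variable {d : ℕ}

lemma sq_sum_aux (x z : Fin d → ℝ) :
    (∑ i, (x i)^2 ≤ ∑ i, (x i - z i)^2) ↔ ∑ i, 2 * x i * z i ≤ ∑ i, (z i)^2 := by
  have h : ∑ i, (x i - z i)^2
      = ∑ i, (x i)^2 - ∑ i, 2 * x i * z i + ∑ i, (z i)^2 := by
    rw [← Finset.sum_sub_distrib, ← Finset.sum_add_distrib]
    exact Finset.sum_congr rfl fun i _ => by ring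
  rw [h]; constructor <;> intro <;> linarith

lemma mem_vorCell_iff (x : EuclideanSpace ℝ (Fin d)) :
    x ∈ vorCellDualD d ↔ ∀ z ∈ dualD d, ∑ i, 2 * x i * z i ≤ ∑ i, (z i)^2 := by
  unfold vorCellDualD
  simp only [Set.mem_setOf_eq]
  refine forall_congr' fun z => imp_congr_right fun hz => ?_
  rw [EuclideanSpace.norm_eq, EuclideanSpace.norm_eq,
    Real.sqrt_le_sqrt_iff (by positivity)]
  simp only [Real.norm_eq_abs, sq_abs, PiLp.sub_apply]
  exact sq_sum_aux x z

lemma abs_int_le_sq (c : ℤ) : |(c:ℝ)| ≤ (c:ℝ)^2 := by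
  rcases eq_or_ne c 0 with h | h
  · simp [h]
  · have h1 : (1:ℝ) ≤ |(c:ℝ)| := by
      rw [← Int.cast_abs]; exact_mod_cast Int.one_le_abs h
    nlinarith [abs_nonneg (c:ℝ), sq_abs (c:ℝ)]

lemma vorCell_eq (x : EuclideanSpace ℝ (Fin d)) :
    x ∈ vorCellDualD d ↔ (∀ i, |x i| ≤ 1) ∧ ∑ i, |x i| ≤ (d : ℝ) / 2 := by
  rw [mem_vorCell_iff]
  constructor
  · intro h
    have hcube : ∀ (i : Fin d) (c : ℝ), (∃ e : ℤ, c = 2 * e) →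
        c * x i ≤ c^2 / 2 := by
      intro i c hc
      have hz : (WithLp.toLp 2 (fun k => if k = i then c else 0) : EuclideanSpace ℝ (Fin d)) ∈ dualD d := by
        left; intro k
        obtain ⟨e, he⟩ := hc
        by_cases hk : k = i
        · exact ⟨e, by simp [hk, he]⟩
        · exact ⟨0, by simp [hk]⟩
      have h0 := h _ hz
      have e1 : ∑ k : Fin d, 2 * x k * (if k = i then c else 0) = 2 * x i * c := by
        simp [mul_ite]
      have e2 : ∑ k : Fin d, ((if k = i then c else (0:ℝ)))^2 = c^2 := by
        simp [apply_ite (fun t : ℝ => t^2)]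
      rw [e1, e2] at h0
      nlinarith [h0]
    constructor
    · intro i
      have h1 := hcube i 2 ⟨1, by norm_num⟩
      have h2 := hcube i (-2) ⟨-1, by norm_num⟩
      rw [abs_le]; constructor <;> nlinarith
    · have hz : (WithLp.toLp 2 (fun k => if 0 ≤ x k then (1:ℝ) else -1) : EuclideanSpace ℝ (Fin d)) ∈ dualD d := by
        right; intro k
        by_cases hk : 0 ≤ x k
        · exact ⟨0, by simp [hk]⟩
        · exact ⟨-1, by simp [hk]; norm_num⟩
      have hh := h _ hz
      have e1 : ∀ k : Fin d, 2 * x k * (if 0 ≤ x k then (1:ℝ) else -1) = 2 * |x k| := by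
        intro k
        by_cases hk : 0 ≤ x k
        · rw [if_pos hk, abs_of_nonneg hk]; ring
        · rw [if_neg hk, abs_of_neg (lt_of_not_ge hk)]; ring
      have e2 : ∀ k : Fin d, ((if 0 ≤ x k then (1:ℝ) else -1))^2 = 1 := by
        intro k; by_cases hk : 0 ≤ x k <;> simp [hk]
      rw [Finset.sum_congr rfl fun k _ => e1 k, Finset.sum_congr rfl fun k _ => e2 k,
        ← Finset.mul_sum] at hh
      simp at hh
      linarith
  · rintro ⟨hcube, hsum⟩ z hz
    rcases hz with heven | hodd
    · apply Finset.sum_le_sum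
      intro i _
      obtain ⟨c, hc⟩ := heven i
      rw [hc]
      have := abs_int_le_sq c
      nlinarith [abs_mul (x i) (c:ℝ), le_abs_self (x i * c), hcube i,
        abs_nonneg (c:ℝ), abs_nonneg (x i), mul_le_mul_of_nonneg_right (hcube i) (abs_nonneg (c:ℝ)),
        sq_abs (c:ℝ)]
    · have key : ∀ i : Fin d, 2 * x i * z i ≤ (z i)^2 - 1 + 2 * |x i| := by
        intro i
        obtain ⟨c, hc⟩ := hodd i
        have ht : (1:ℝ) ≤ |z i| := by
          rw [hc]
          have : (2*(c:ℝ)+1) = ((2*c+1 : ℤ) : ℝ) := by push_cast; ring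
          rw [this, ← Int.cast_abs]
          exact_mod_cast Int.one_le_abs (by omega)
        have h1 : x i * z i ≤ |x i| * |z i| := by
          rw [← abs_mul]; exact le_abs_self _
        have h2 : |x i| ≤ 1 := hcube i
        have h3 : |z i|^2 = (z i)^2 := sq_abs _
        nlinarith [mul_nonneg (sub_nonneg.2 ht) (by linarith [abs_nonneg (x i)] : (0:ℝ) ≤ |z i| + 1 - 2 * |x i|)]
      calc ∑ i, 2 * x i * z i ≤ ∑ i, ((z i)^2 - 1 + 2 * |x i|) :=
            Finset.sum_le_sum fun i _ => key i
        _ = ∑ i, (z i)^2 - d + 2 * ∑ i, |x i| := by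
            rw [Finset.sum_add_distrib, Finset.sum_sub_distrib, ← Finset.mul_sum]
            simp
        _ ≤ ∑ i, (z i)^2 := by linarith

lemma cross_eq (hd : 1 ≤ d) :
    crossPolytope d = {x : EuclideanSpace ℝ (Fin d) | ∑ i, |x i| ≤ 1} := by
  apply le_antisymm
  · apply convexHull_min
    · rintro x ⟨i, hi | hi⟩ <;> subst hi <;>
        simp [Set.mem_setOf_eq, EuclideanSpace.single_apply, apply_ite abs]
    · intro x hx y hy a b ha hb hab
      simp only [Set.mem_setOf_eq] at *
      have : ∀ i, |(a • x + b • y : EuclideanSpace ℝ (Fin d)) i| ≤ a * |x i| + b * |y i| := by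
        intro i
        have : (a • x + b • y : EuclideanSpace ℝ (Fin d)) i = a * x i + b * y i := rfl
        rw [this]
        calc |a * x i + b * y i| ≤ |a * x i| + |b * y i| := abs_add_le _ _
          _ = a * |x i| + b * |y i| := by
              rw [abs_mul, abs_mul, abs_of_nonneg ha, abs_of_nonneg hb]
      calc ∑ i, |(a • x + b • y : EuclideanSpace ℝ (Fin d)) i|
          ≤ ∑ i, (a * |x i| + b * |y i|) := Finset.sum_le_sum fun i _ => this i
        _ = a * ∑ i, |x i| + b * ∑ i, |y i| := by
            rw [Finset.sum_add_distrib, Finset.mul_sum, Finset.mul_sum]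
        _ ≤ a * 1 + b * 1 := by
            gcongr
        _ = 1 := by linarith
  · intro x hx
    simp only [Set.mem_setOf_eq] at hx
    set G : Set (EuclideanSpace ℝ (Fin d)) :=
      {x | ∃ i, x = EuclideanSpace.single i (1 : ℝ) ∨ x = -EuclideanSpace.single i (1 : ℝ)}
    have hG : ∀ i : Fin d, EuclideanSpace.single i (1:ℝ) ∈ convexHull ℝ G ∧
        -EuclideanSpace.single i (1:ℝ) ∈ convexHull ℝ G := fun i =>
      ⟨subset_convexHull ℝ G ⟨i, Or.inl rfl⟩, subset_convexHull ℝ G ⟨i, Or.inr rfl⟩⟩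
    have i0 : Fin d := ⟨0, hd⟩
    have h0 : (0 : EuclideanSpace ℝ (Fin d)) ∈ convexHull ℝ G := by
      have := (convex_convexHull ℝ G) (hG i0).1 (hG i0).2
        (by norm_num : (0:ℝ) ≤ 1/2) (by norm_num : (0:ℝ) ≤ 1/2) (by norm_num)
      convert this using 1
      module
    -- weights over Option (Fin d)
    set w : Option (Fin d) → ℝ := fun o => o.elim (1 - ∑ i, |x i|) (fun i => |x i|)
    set p : Option (Fin d) → EuclideanSpace ℝ (Fin d) := fun o =>
      o.elim 0 (fun i => if 0 ≤ x i then EuclideanSpace.single i (1:ℝ)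
        else -EuclideanSpace.single i (1:ℝ))
    have hmem := (convex_convexHull ℝ G).sum_mem (t := (Finset.univ : Finset (Option (Fin d)))) (w := w) (z := p)
      (fun o _ => ?_) ?_ (fun o _ => ?_)
    rotate_left
    · rcases o with _ | i
      · simpa [w] using hx
      · simp [w, abs_nonneg]
    · simp [w, Fintype.sum_option]
    · rcases o with _ | i
      · exact h0
      · simp only [p, Option.elim]
        split
        · exact (hG i).1
        · exact (hG i).2
    convert hmem using 1
    case e'_4 => rfl
    rw [Fintype.sum_option]
    have : ∀ i : Fin d, w (some i) • p (some i) = x i • EuclideanSpace.single i (1:ℝ) := by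
      intro i
      simp only [w, p, Option.elim]
      by_cases hi : 0 ≤ x i
      · rw [if_pos hi, abs_of_nonneg hi]
      · rw [if_neg hi, abs_of_neg (lt_of_not_ge hi), smul_neg, neg_smul, neg_neg]
    rw [Finset.sum_congr rfl fun i _ => this i]
    simp only [w, p, Option.elim, smul_zero, zero_add]
    ext k
    have hap : ∀ (f : Fin d → EuclideanSpace ℝ (Fin d)), (∑ i, f i) k = ∑ i, f i k := by
      intro f
      rw [WithLp.ofLp_sum]; exact Finset.sum_apply k Finset.univ _
    rw [hap]
    simp [EuclideanSpace.single_apply]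

open scoped Pointwise in
lemma smul_l1ball (c : ℝ) (hc : 0 < c) :
    c • {x : EuclideanSpace ℝ (Fin d) | ∑ i, |x i| ≤ 1}
      = {x : EuclideanSpace ℝ (Fin d) | ∑ i, |x i| ≤ c} := by
  ext x
  rw [Set.mem_smul_set_iff_inv_smul_mem₀ hc.ne']
  simp only [Set.mem_setOf_eq]
  have : ∀ i, |(c⁻¹ • x : EuclideanSpace ℝ (Fin d)) i| = c⁻¹ * |x i| := by
    intro i
    have : (c⁻¹ • x : EuclideanSpace ℝ (Fin d)) i = c⁻¹ * x i := rfl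
    rw [this, abs_mul, abs_of_nonneg (inv_nonneg.2 hc.le)]
  rw [Finset.sum_congr rfl fun i _ => this i, ← Finset.mul_sum,
    inv_mul_le_iff₀ hc, mul_one]

open scoped Pointwise in
lemma main_eq (hd : 1 ≤ d) :
    vorCellDualD d =
      {x : EuclideanSpace ℝ (Fin d) | ∀ i, |x i| ≤ 1} ∩
        ((d : ℝ) / 2) • crossPolytope d := by
  have hc : (0:ℝ) < (d:ℝ)/2 := by positivity
  rw [cross_eq hd, smul_l1ball _ hc]
  ext x
  rw [vorCell_eq]
  simp [Set.mem_inter_iff, Set.mem_setOf_eq]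

end Vor

section XC

/-- index type for the 4d+1 constraints -/
abbrev Idx (d : ℕ) := (Fin d ⊕ Fin d) ⊕ (Fin d ⊕ Fin d) ⊕ Fin 1

noncomputable def idxEquiv (d : ℕ) : Fin (4*d+1) ≃ Idx d :=
  Fintype.equivOfCardEq (by simp; ring)

def colEquiv (d : ℕ) : Fin d ⊕ Fin d ≃ Fin (d + d) := finSumFinEquiv

/-- constraint rows -/
def Brow (d : ℕ) : Idx d → (Fin d ⊕ Fin d) → ℝ
  | Sum.inl (Sum.inl k) => Sum.elim (fun a => if a = k then 1 else 0) 0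
  | Sum.inl (Sum.inr k) => Sum.elim (fun a => if a = k then -1 else 0) 0
  | Sum.inr (Sum.inl (Sum.inl k)) =>
      Sum.elim (fun a => if a = k then 1 else 0) (fun a => if a = k then -1 else 0)
  | Sum.inr (Sum.inl (Sum.inr k)) =>
      Sum.elim (fun a => if a = k then -1 else 0) (fun a => if a = k then -1 else 0)
  | Sum.inr (Sum.inr _) => Sum.elim 0 1

noncomputable def brhs (d : ℕ) : Idx d → ℝ
  | Sum.inl _ => 1
  | Sum.inr (Sum.inl _) => 0
  | Sum.inr (Sum.inr _) => (d : ℝ) / 2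

noncomputable def Amat (d : ℕ) : Fin (4*d+1) → Fin (d+d) → ℝ :=
  fun i j => Brow d (idxEquiv d i) ((colEquiv d).symm j)

noncomputable def bvec (d : ℕ) : Fin (4*d+1) → ℝ := fun i => brhs d (idxEquiv d i)

/-- the feasible region, in friendly form -/
lemma feas_eq (d : ℕ) : {v : Fin (d+d) → ℝ | ∀ i, ∑ j, Amat d i j * v j ≤ bvec d i}
    = {v : Fin (d+d) → ℝ |
        (∀ k : Fin d, |v (colEquiv d (Sum.inl k))| ≤ 1) ∧
        (∀ k : Fin d, |v (colEquiv d (Sum.inl k))| ≤ v (colEquiv d (Sum.inr k))) ∧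
        ∑ k : Fin d, v (colEquiv d (Sum.inr k)) ≤ (d:ℝ)/2} := by
  ext v
  simp only [Set.mem_setOf_eq, Amat, bvec]
  rw [(idxEquiv d).forall_congr_left]
  simp only [Equiv.apply_symm_apply]
  have hsum : ∀ i' : Idx d, ∑ j, Brow d i' ((colEquiv d).symm j) * v j
      = ∑ j' : Fin d ⊕ Fin d, Brow d i' j' * v (colEquiv d j') := by
    intro i'
    rw [← Equiv.sum_comp (colEquiv d) (fun j => Brow d i' ((colEquiv d).symm j) * v j)]
    simp
  constructor
  · intro h
    refine ⟨fun k => ?_, fun k => ?_, ?_⟩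
    · have h1 := h (Sum.inl (Sum.inl k)); have h2 := h (Sum.inl (Sum.inr k))
      rw [hsum] at h1 h2
      simp only [Brow, brhs, Fintype.sum_sum_type, Sum.elim_inl, Sum.elim_inr,
        ite_mul, one_mul, neg_one_mul, zero_mul, Pi.zero_apply,
        Finset.sum_ite_eq', Finset.mem_univ, if_true, Finset.sum_const_zero,
        add_zero, zero_add] at h1 h2
      rw [abs_le]; constructor <;> linarith
    · have h1 := h (Sum.inr (Sum.inl (Sum.inl k)))
      have h2 := h (Sum.inr (Sum.inl (Sum.inr k)))
      rw [hsum] at h1 h2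
      simp only [Brow, brhs, Fintype.sum_sum_type, Sum.elim_inl, Sum.elim_inr,
        ite_mul, one_mul, neg_one_mul, zero_mul, Pi.zero_apply,
        Finset.sum_ite_eq', Finset.mem_univ, if_true, Finset.sum_const_zero,
        add_zero, zero_add] at h1 h2
      rw [abs_le]; constructor <;> linarith
    · have h1 := h (Sum.inr (Sum.inr 0))
      rw [hsum] at h1
      simpa only [Brow, brhs, Fintype.sum_sum_type, Sum.elim_inl, Sum.elim_inr,
        Pi.zero_apply, Pi.one_apply, zero_mul, one_mul, Finset.sum_const_zero, zero_add] using h1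
  · rintro ⟨hcube, habs, hsum2⟩ i'
    rw [hsum]
    rcases i' with (k | k) | (k | k) | k <;>
      simp only [Brow, brhs, Fintype.sum_sum_type, Sum.elim_inl, Sum.elim_inr,
        ite_mul, one_mul, neg_one_mul, zero_mul, Pi.zero_apply, Pi.one_apply,
        Finset.sum_ite_eq', Finset.mem_univ, if_true, Finset.sum_const_zero,
        add_zero, zero_add]
    · linarith [abs_le.mp (hcube k)]
    · linarith [abs_le.mp (hcube k)]
    · linarith [abs_le.mp (habs k)]
    · linarith [abs_le.mp (habs k)]
    · exact hsum2
end XC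

lemma bounded_feas (d : ℕ) :
    Bornology.IsBounded {v : Fin (d+d) → ℝ | ∀ i, ∑ j, Amat d i j * v j ≤ bvec d i} := by
  rw [feas_eq]
  refine (Bornology.IsBounded.pi (S := fun _ : Fin (d+d) => Set.Icc (-((d:ℝ)+1)) ((d:ℝ)+1))
    (fun _ => Metric.isBounded_Icc _ _)).subset ?_
  rintro v ⟨h1, h2, h3⟩ j _
  have hj : j = colEquiv d ((colEquiv d).symm j) := ((colEquiv d).apply_symm_apply j).symm
  rw [hj]
  rcases (colEquiv d).symm j with k | k
  · have := abs_le.mp (h1 k)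
    refine Set.mem_Icc.mpr ⟨?_, ?_⟩ <;> push_cast <;> linarith [Nat.cast_nonneg (α := ℝ) d]
  · have hy0 : ∀ l : Fin d, 0 ≤ v (colEquiv d (Sum.inr l)) :=
      fun l => le_trans (abs_nonneg _) (h2 l)
    have hyk : v (colEquiv d (Sum.inr k)) ≤ (d:ℝ)/2 := by
      refine le_trans ?_ h3
      exact Finset.single_le_sum (fun l _ => hy0 l) (Finset.mem_univ k)
    refine Set.mem_Icc.mpr ⟨?_, ?_⟩ <;> push_cast
    · linarith [hy0 k, Nat.cast_nonneg (α := ℝ) d]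
    · linarith [Nat.cast_nonneg (α := ℝ) d]

noncomputable def projMap (d : ℕ) : (Fin (d+d) → ℝ) →ₗ[ℝ] EuclideanSpace ℝ (Fin d) :=
  (WithLp.linearEquiv 2 ℝ (Fin d → ℝ)).symm.toLinearMap ∘ₗ
    LinearMap.pi (fun k => LinearMap.proj (colEquiv d (Sum.inl k)))

lemma projMap_apply (d : ℕ) (v : Fin (d+d) → ℝ) (k : Fin d) :
    projMap d v k = v (colEquiv d (Sum.inl k)) := rfl

lemma image_feas (d : ℕ) :
    projMap d '' {v : Fin (d+d) → ℝ | ∀ i, ∑ j, Amat d i j * v j ≤ bvec d i}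
      = {x : EuclideanSpace ℝ (Fin d) | (∀ i, |x i| ≤ 1) ∧ ∑ i, |x i| ≤ (d:ℝ)/2} := by
  rw [feas_eq]
  ext x
  constructor
  · rintro ⟨v, ⟨h1, h2, h3⟩, rfl⟩
    refine ⟨fun k => ?_, ?_⟩
    · rw [projMap_apply]; exact h1 k
    · calc ∑ k, |projMap d v k| ≤ ∑ k, v (colEquiv d (Sum.inr k)) := by
            refine Finset.sum_le_sum fun k _ => ?_
            rw [projMap_apply]; exact h2 k
        _ ≤ (d:ℝ)/2 := h3
  · rintro ⟨h1, h2⟩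
    refine ⟨fun j => Sum.elim (fun k => x k) (fun k => |x k|) ((colEquiv d).symm j),
      ⟨fun k => ?_, fun k => ?_, ?_⟩, ?_⟩
    · simp only [Equiv.symm_apply_apply, Sum.elim_inl]; exact h1 k
    · simp only [Equiv.symm_apply_apply, Sum.elim_inl, Sum.elim_inr]; exact le_refl _
    · simp only [Equiv.symm_apply_apply, Sum.elim_inr]; exact h2
    · ext k
      rw [projMap_apply]
      simp only [Equiv.symm_apply_apply, Sum.elim_inl]


/-- `VC(D̄_d★) = [−1,1]^d ∩ (d/2)·conv{±e_1,…,±e_d}`: the Voronoi cell of `D̄_d★`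
is the intersection of a cube and a dilated crosspolytope; consequently
`xc(VC(D_d★)) = O(d)`. -/
theorem voronoi_dualD_eq_cube_inter_cross :
    ∃ C : ℕ, ∀ d : ℕ, 1 ≤ d →
      vorCellDualD d =
          {x : EuclideanSpace ℝ (Fin d) | ∀ i, |x i| ≤ 1} ∩
            ((d : ℝ) / 2) • crossPolytope d ∧
        xc (vorCellDualD d) ≤ C * d := by
  refine ⟨5, fun d hd => ⟨main_eq hd, ?_⟩⟩
  have hmem : (4*d+1) ∈ {m | ∃ (n : ℕ) (A : Fin m → Fin n → ℝ) (b : Fin m → ℝ)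
      (π : (Fin n → ℝ) →ₗ[ℝ] EuclideanSpace ℝ (Fin d)),
      Bornology.IsBounded {x : Fin n → ℝ | ∀ i, ∑ j, A i j * x j ≤ b i} ∧
      π '' {x : Fin n → ℝ | ∀ i, ∑ j, A i j * x j ≤ b i} = vorCellDualD d} := by
    refine ⟨d+d, Amat d, bvec d, projMap d, bounded_feas d, ?_⟩
    rw [image_feas d]
    exact Set.ext fun x => (vorCell_eq x).symm
  calc xc (vorCellDualD d) ≤ 4*d+1 := Nat.sInf_le hmem
    _ ≤ 5*d := by omega
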